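/- Let f₁,…,f_m, g : ℝⁿ → ℝ, S ⊆ ℝⁿ, and φ ∈ ℝᵐ. If S is an F_σ set and Γ(x) = (f₁(x),…,f_m(x),g(x)) is continuous, then inf_{μ ∈ M(S,φ)} E_μ[g(X)] = inf_{μ ∈ M_{m+1}(S,φ)} E_μ[g(X)] and sup_{μ ∈ M(S,φ)} E_μ[g(X)] = sup_{μ ∈ M_{m+1}(S,φ)} E_μ[g(X)] (in the extended reals). -/

import Mathlib

open MeasureTheory Set Filter Topology
open scoped BigOperators ENNReal

noncomputable section

/-- The support of a measure: points all of whose open neighborhoods have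
positive measure. -/
def msupport {E : Type*} [TopologicalSpace E] [MeasurableSpace E]
    (μ : Measure E) : Set E :=
  {x | ∀ U : Set E, IsOpen U → x ∈ U → μ U ≠ 0}

/-- `M(S,φ)`: Borel probability measures with support contained in `S`,
with `E[f i] = φ i` for all `i` and `E[g]` finite. -/
def MC (n m : ℕ) (f : (Fin n → ℝ) → Fin m → ℝ) (g : (Fin n → ℝ) → ℝ)
    (S : Set (Fin n → ℝ)) (φ : Fin m → ℝ) : Set (Measure (Fin n → ℝ)) :=
  {μ | IsProbabilityMeasure μ ∧ msupport μ ⊆ S ∧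
    (∀ i, Integrable (fun x => f x i) μ) ∧ (∀ i, ∫ x, f x i ∂μ = φ i) ∧
    Integrable g μ}

/-- `M_k(S,φ)`: members of `M(S,φ)` whose support has at most `k` points. -/
def MCk (n m : ℕ) (f : (Fin n → ℝ) → Fin m → ℝ) (g : (Fin n → ℝ) → ℝ)
    (S : Set (Fin n → ℝ)) (φ : Fin m → ℝ) (k : ℕ) : Set (Measure (Fin n → ℝ)) :=
  {μ | μ ∈ MC n m f g S φ ∧ (msupport μ).encard ≤ (k : ℕ∞)}

/-! ### Auxiliary lemmas -/

/-- The complement of the support of a measure is null (second countable space). -/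
lemma msupport_compl_null {X : Type*} [TopologicalSpace X] [MeasurableSpace X]
    [SecondCountableTopology X] (μ : Measure X) : μ (msupport μ)ᶜ = 0 := by
  set 𝒰 : Set (Set X) := {U | IsOpen U ∧ μ U = 0} with h𝒰
  obtain ⟨T, hTc, hT𝒰, hTeq⟩ := TopologicalSpace.isOpen_sUnion_countable 𝒰 (fun U hU => hU.1)
  have h1 : (msupport μ)ᶜ ⊆ ⋃₀ 𝒰 := by
    intro x hx
    simp only [msupport, mem_compl_iff, mem_setOf_eq, not_forall] at hx
    obtain ⟨U, hUo, hxU, hU0⟩ := hx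
    exact ⟨U, ⟨hUo, not_not.mp hU0⟩, hxU⟩
  have h2 : μ (⋃₀ 𝒰) = 0 := by
    rw [← hTeq]
    exact (measure_sUnion_null_iff hTc).2 (fun U hU => (hT𝒰 hU).2)
  exact measure_mono_null h1 h2

/-- Proper separation of a point in the closure of a convex set but not in the set. -/
lemma exists_proper_separation {E : Type*} [NormedAddCommGroup E] [NormedSpace ℝ E]
    [FiniteDimensional ℝ E] {C : Set E} (hC : Convex ℝ C) {b : E}
    (hb : b ∈ closure C) (hbn : b ∉ C) :
    ∃ ℓ : E →L[ℝ] ℝ, (∀ x ∈ C, ℓ b ≤ ℓ x) ∧ ∃ x₀ ∈ C, ℓ b < ℓ x₀ := by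
  classical
  have hCne : C.Nonempty := closure_nonempty_iff.mp ⟨b, hb⟩
  set A : AffineSubspace ℝ E := affineSpan ℝ C with hA
  have hAclosed : IsClosed (A : Set E) := A.closed_of_finiteDimensional
  have hbA : b ∈ A := by
    have := closure_mono (subset_affineSpan ℝ C) hb
    rwa [hAclosed.closure_eq] at this
  set V : Submodule ℝ E := A.direction with hV
  have hmemV : ∀ x ∈ C, x - b ∈ V := by
    intro x hx
    simpa using AffineSubspace.vsub_mem_direction (subset_affineSpan ℝ C hx) hbA
  set D : Set V := {v : V | b + (v : E) ∈ C} with hD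
  have hDconv : Convex ℝ D := by
    intro v hv w hw a c ha hc hac
    have h1 := hC hv hw ha hc hac
    simp only [hD, mem_setOf_eq] at *
    obtain rfl : c = 1 - a := by linarith
    convert h1 using 1
    push_cast
    module
  have hDmem : ∀ (x) (hx : x ∈ C), (⟨x - b, hmemV x hx⟩ : V) ∈ D := by
    intro x hx
    simp only [hD, mem_setOf_eq]
    simpa using hx
  have h0cl : (0 : V) ∈ closure D := by
    obtain ⟨u, hu, hulim⟩ := mem_closure_iff_seq_limit.1 hb
    have : Tendsto (fun k => (⟨u k - b, hmemV _ (hu k)⟩ : V)) atTop (𝓝 0) := by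
      rw [tendsto_subtype_rng]
      simpa using hulim.sub (tendsto_const_nhds (x := b))
    exact mem_closure_of_tendsto this (Eventually.of_forall fun k => hDmem _ (hu k))
  have h0nD : (0 : V) ∉ D := by simpa [hD] using hbn
  have hspan : Submodule.span ℝ D = ⊤ := by
    apply Submodule.map_injective_of_injective V.injective_subtype
    rw [Submodule.map_span, Submodule.map_subtype_top]
    apply le_antisymm
    · rw [Submodule.span_le]
      rintro _ ⟨v, _, rfl⟩
      exact v.2
    · intro z hz
      have hz' : z ∈ Submodule.span ℝ (C -ᵥ C) := by
        rw [← vectorSpan_def, ← direction_affineSpan (k := ℝ) (s := C)]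
        exact hz
      refine Submodule.span_le.2 ?_ hz'
      rintro _ ⟨x, hx, y, hy, rfl⟩
      have hxm : x - b ∈ V.subtype '' D := ⟨⟨x - b, hmemV x hx⟩, hDmem x hx, rfl⟩
      have hym : y - b ∈ V.subtype '' D := ⟨⟨y - b, hmemV y hy⟩, hDmem y hy, rfl⟩
      have hzz : (x - b) - (y - b) ∈ Submodule.span ℝ (⇑V.subtype '' D) :=
        sub_mem (Submodule.subset_span hxm) (Submodule.subset_span hym)
      simpa [vsub_eq_sub, sub_sub_sub_cancel_right] using hzz
  have haff : affineSpan ℝ D = (⊤ : AffineSubspace ℝ V) := by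
    have h0 : (0 : V) ∈ affineSpan ℝ D := by
      have hcl : IsClosed (affineSpan ℝ D : Set V) :=
        (affineSpan ℝ D).closed_of_finiteDimensional
      have := closure_mono (subset_affineSpan ℝ D) h0cl
      rwa [hcl.closure_eq] at this
    rw [eq_top_iff]
    intro v _
    have hdir : v ∈ (affineSpan ℝ D).direction := by
      have hle : Submodule.span ℝ D ≤ (affineSpan ℝ D).direction := by
        rw [Submodule.span_le]
        intro d hd
        simpa using AffineSubspace.vsub_mem_direction (subset_affineSpan ℝ D hd) h0
      exact hle (hspan ▸ Submodule.mem_top)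
    simpa using AffineSubspace.vadd_mem_of_mem_direction hdir h0
  have hint : (interior D).Nonempty :=
    hDconv.interior_nonempty_iff_affineSpan_eq_top.2 haff
  obtain ⟨y, hy⟩ := hint
  obtain ⟨ℓ₀, hℓ₀⟩ := geometric_hahn_banach_open_point hDconv.interior isOpen_interior
    (fun h => h0nD (interior_subset h))
  have hℓ₀' : ∀ a ∈ interior D, ℓ₀ a < 0 := by
    intro a ha
    have := hℓ₀ a ha
    rwa [map_zero] at this
  have hle : ∀ x ∈ D, ℓ₀ x ≤ 0 := by
    intro x hx
    have key : ∀ t : ℝ, 0 < t → t ≤ 1 → (1 - t) * ℓ₀ x + t * ℓ₀ y < 0 := by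
      intro t ht ht1
      have hmem : (1 - t) • x + t • y ∈ interior D :=
        hDconv.combo_self_interior_mem_interior hx hy (by linarith) ht (by ring)
      have := hℓ₀' _ hmem
      simpa [map_add, _root_.map_smul, smul_eq_mul] using this
    have htend : Tendsto (fun t : ℝ => (1 - t) * ℓ₀ x + t * ℓ₀ y) (𝓝[>] (0 : ℝ))
        (𝓝 (ℓ₀ x)) := by
      have hcont : Continuous (fun t : ℝ => (1 - t) * ℓ₀ x + t * ℓ₀ y) := by fun_prop
      have := (hcont.tendsto 0).mono_left (nhdsWithin_le_nhds (s := Ioi (0:ℝ)))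
      simpa using this
    refine le_of_tendsto htend ?_
    filter_upwards [Ioc_mem_nhdsGT_of_mem (by constructor <;> norm_num :
      (0 : ℝ) ∈ Ico (0 : ℝ) 1)] with t ht
    exact (key t ht.1 ht.2).le
  obtain ⟨W, hW⟩ := Submodule.exists_isCompl V
  set L : E →ₗ[ℝ] ℝ := LinearMap.ofIsCompl hW ℓ₀.toLinearMap 0 with hL
  have hLV : ∀ v : V, L v = ℓ₀ v := fun v => LinearMap.ofIsCompl_left_apply hW v
  set Λ : E →L[ℝ] ℝ := LinearMap.toContinuousLinearMap (-L) with hΛ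
  have hΛapp : ∀ z : E, Λ z = -(L z) := fun z => rfl
  have hyD : y ∈ D := interior_subset hy
  have hbyC : b + ↑y ∈ C := hyD
  refine ⟨Λ, ?_, ⟨b + ↑y, hbyC, ?_⟩⟩
  · intro x hx
    have hdecomp : x = b + ((⟨x - b, hmemV x hx⟩ : V) : E) := by simp
    have : L x = L b + ℓ₀ ⟨x - b, hmemV x hx⟩ := by
      conv_lhs => rw [hdecomp]
      rw [map_add, hLV]
    have hle' := hle _ (hDmem x hx)
    rw [hΛapp, hΛapp, this]
    linarith
  · have : L (b + ↑y) = L b + ℓ₀ y := by rw [map_add, hLV]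
    have hlt := hℓ₀' y hy
    rw [hΛapp, hΛapp, this]
    linarith

/-- The barycenter of the pushforward of a probability measure under a continuous map
lies in the convex hull of the image of the support. -/
lemma barycenter_mem_convexHull {X : Type*} [TopologicalSpace X] [MeasurableSpace X]
    [SecondCountableTopology X] [OpensMeasurableSpace X]
    {E : Type*} [NormedAddCommGroup E] [NormedSpace ℝ E] [FiniteDimensional ℝ E]
    {Γ : X → E} (hΓ : Continuous Γ) (μ : Measure X) [IsProbabilityMeasure μ]
    (hint : Integrable Γ μ) :
    ∫ x, Γ x ∂μ ∈ convexHull ℝ (Γ '' msupport μ) := by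
  have hcompl := msupport_compl_null μ
  set T := msupport μ with hT
  set C := convexHull ℝ (Γ '' T) with hCdef
  have haeT : ∀ᵐ x ∂μ, x ∈ T := by
    rw [ae_iff]
    exact hcompl
  set b := ∫ x, Γ x ∂μ with hbdef
  have hbmem : b ∈ closure C := by
    apply Convex.integral_mem (convex_convexHull ℝ _).closure isClosed_closure ?_ hint
    filter_upwards [haeT] with x hx
    exact subset_closure (subset_convexHull ℝ _ (mem_image_of_mem Γ hx))
  by_contra hbn
  obtain ⟨ℓ, hℓle, x₀, hx₀C, hx₀⟩ :=
    exists_proper_separation (convex_convexHull ℝ _) hbmem hbn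
  set h : X → ℝ := fun x => ℓ (Γ x) - ℓ b with hhdef
  have hℓint : Integrable (fun x => ℓ (Γ x)) μ := ℓ.integrable_comp hint
  have hhint : Integrable h μ := hℓint.sub (integrable_const _)
  have hhnn : 0 ≤ᵐ[μ] h := by
    filter_upwards [haeT] with x hx
    have : ℓ b ≤ ℓ (Γ x) := hℓle _ (subset_convexHull ℝ _ (mem_image_of_mem Γ hx))
    simp only [hhdef, Pi.zero_apply]
    linarith
  have hhzero : ∫ x, h x ∂μ = 0 := by
    rw [hhdef]
    simp only
    rw [integral_sub hℓint (integrable_const _), integral_const]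
    rw [ℓ.integral_comp_comm hint]
    simp [← hbdef]
  have hae0 : h =ᵐ[μ] 0 := (integral_eq_zero_iff_of_nonneg_ae hhnn hhint).1 hhzero
  have hU : μ {x | h x ≠ 0} = 0 := by
    have := ae_iff.1 hae0
    simpa using this
  have hT0 : ∀ x ∈ T, h x = 0 := by
    intro x hx
    by_contra hne
    have hopen : IsOpen {x | h x ≠ 0} := by
      have hcont : Continuous h := (ℓ.continuous.comp hΓ).sub continuous_const
      exact isOpen_compl_singleton.preimage hcont
    exact hx {x | h x ≠ 0} hopen hne hU
  have hC' : C ⊆ {y | ℓ y = ℓ b} := by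
    rw [hCdef]
    apply convexHull_min
    · rintro _ ⟨x, hx, rfl⟩
      have := hT0 x hx
      simp only [hhdef, sub_eq_zero] at this
      exact this
    · have : {y : E | ℓ y = ℓ b} = ℓ.toLinearMap ⁻¹' {ℓ b} := rfl
      rw [this]
      exact (convex_singleton (ℓ b)).linear_preimage ℓ.toLinearMap
  have := hC' hx₀C
  simp only [mem_setOf_eq] at this
  linarith

/-- Carathéodory-type reduction: from a point of a convex hull in `ℝ^m × ℝ` one can find a
point in the hull of at most `m+1` of the points, with the same first coordinates and a
smaller-or-equal last coordinate. -/
lemma cara_min (m : ℕ) (A : Set ((Fin m → ℝ) × ℝ)) {p : (Fin m → ℝ) × ℝ}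
    (hp : p ∈ convexHull ℝ A) :
    ∃ t : Finset ((Fin m → ℝ) × ℝ), ↑t ⊆ A ∧ t.card ≤ m + 1 ∧
      ∃ q ∈ convexHull ℝ (↑t : Set ((Fin m → ℝ) × ℝ)), q.1 = p.1 ∧ q.2 ≤ p.2 := by
  classical
  have hrank : Module.finrank ℝ ((Fin m → ℝ) × ℝ) = m + 1 := by
    simp [Module.finrank_prod]
  rw [convexHull_eq_union] at hp
  simp only [mem_iUnion, exists_prop] at hp
  obtain ⟨t, htA, hAI, hpt⟩ := hp
  have hcard : t.card ≤ m + 2 := by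
    have h1 := hAI.card_le_finrank_succ
    have h2 : Module.finrank ℝ
        (vectorSpan ℝ (Set.range ((↑) : ↥t → (Fin m → ℝ) × ℝ))) ≤ m + 1 := by
      rw [← hrank]
      exact Submodule.finrank_le _
    rw [Fintype.card_coe] at h1
    omega
  rcases lt_or_eq_of_le hcard with hlt | heq
  · exact ⟨t, htA, by omega, p, hpt, rfl, le_rfl⟩
  · have hspan : affineSpan ℝ (Set.range ((↑) : ↥t → (Fin m → ℝ) × ℝ)) = ⊤ := by
      rw [hAI.affineSpan_eq_top_iff_card_eq_finrank_add_one]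
      rw [Fintype.card_coe, heq, hrank]
    set B : AffineBasis ↥t ℝ ((Fin m → ℝ) × ℝ) := ⟨(↑), hAI, hspan⟩ with hB
    have hBapp : ∀ j : ↥t, B j = (j : (Fin m → ℝ) × ℝ) := fun j => rfl
    have hrangeB : Set.range (B : ↥t → (Fin m → ℝ) × ℝ) = ↑t := Subtype.range_coe
    set σ := convexHull ℝ (↑t : Set ((Fin m → ℝ) × ℝ)) with hσ
    have hσc : IsCompact σ := t.finite_toSet.isCompact_convexHull ℝ
    set K := σ ∩ {y : (Fin m → ℝ) × ℝ | y.1 = p.1} with hK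
    have hKc : IsCompact K := hσc.inter_right (isClosed_eq continuous_fst continuous_const)
    have hKne : K.Nonempty := ⟨p, hpt, rfl⟩
    obtain ⟨q, hqK, hqmin⟩ :=
      hKc.exists_isMinOn hKne (continuous_snd.continuousOn (s := K))
    have hqσ : q ∈ σ := hqK.1
    have hq1 : q.1 = p.1 := hqK.2
    -- all barycentric coordinates are nonnegative on σ
    have hnn : ∀ (j : ↥t) (x : (Fin m → ℝ) × ℝ), x ∈ σ → 0 ≤ B.coord j x := by
      intro j x hx
      have himg : (B.coord j) '' σ ⊆ Icc (0 : ℝ) 1 := by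
        rw [hσ, AffineMap.image_convexHull]
        apply convexHull_min ?_ (convex_Icc 0 1)
        rintro _ ⟨y, hy, rfl⟩
        have : y = B ⟨y, hy⟩ := rfl
        rw [this, B.coord_apply]
        split <;> constructor <;> norm_num
      have := himg ⟨x, hx, rfl⟩
      exact this.1
    -- some coordinate of q vanishes
    have hex : ∃ i, B.coord i q ≤ 0 := by
      by_contra hno
      push_neg at hno
      have hqint : q ∈ interior σ := by
        rw [hσ, ← hrangeB, B.interior_convexHull]
        exact hno
      obtain ⟨δ, hδ, hball⟩ := Metric.isOpen_iff.1 isOpen_interior q hqint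
      set v : (Fin m → ℝ) × ℝ := ((0 : Fin m → ℝ), (1 : ℝ)) with hv
      have hvnorm : ‖v‖ = 1 := by
        rw [hv, Prod.norm_def]
        simp
      set q' := q - (δ / 2) • v with hq'
      have hq'ball : q' ∈ Metric.ball q δ := by
        rw [Metric.mem_ball, dist_eq_norm, hq']
        have : q - (δ / 2) • v - q = -((δ / 2) • v) := by abel
        rw [this, norm_neg, norm_smul, hvnorm]
        simp [abs_of_pos hδ]
        linarith
      have hq'σ : q' ∈ σ := interior_subset (hball hq'ball)
      have hq'K : q' ∈ K := by
        refine ⟨hq'σ, ?_⟩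
        have : q'.1 = q.1 := by
          rw [hq', hv]
          simp [Prod.fst_sub]
        rw [mem_setOf_eq, this]
        exact hq1
      have hmin := isMinOn_iff.1 hqmin q' hq'K
      have : q'.2 = q.2 - δ / 2 := by
        rw [hq', hv]
        simp
      rw [this] at hmin
      linarith
    obtain ⟨i, hi⟩ := hex
    have hi0 : B.coord i q = 0 := le_antisymm hi (hnn i q hqσ)
    set w : ↥t → ℝ := fun j => B.coord j q with hw
    have hsum : ∑ j, w j = 1 := B.sum_coord_apply_eq_one q
    have hq_comb : (Finset.univ.affineCombination ℝ (B : ↥t → (Fin m → ℝ) × ℝ) w) = q :=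
      B.affineCombination_coord_eq_self q
    have hwi : w i = 0 := hi0
    have hsum' : ∑ j ∈ Finset.univ.erase i, w j = 1 := by
      rw [Finset.sum_erase _ hwi, hsum]
    have hq_comb' :
        (Finset.univ.erase i).affineCombination ℝ (B : ↥t → (Fin m → ℝ) × ℝ) w = q := by
      rw [← hq_comb,
        Finset.affineCombination_indicator_subset w (B : ↥t → (Fin m → ℝ) × ℝ)
          (Finset.erase_subset i Finset.univ)]
      congr 1
      funext j
      by_cases hj : j ∈ Finset.univ.erase i
      · rw [Set.indicator_of_mem (by exact_mod_cast hj)]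
      · have hj' : j = i := by simpa using hj
        rw [Set.indicator_of_notMem (by exact_mod_cast hj)]
        rw [hj', hwi]
    set t' : Finset ((Fin m → ℝ) × ℝ) := t.erase ↑i with ht'
    have hqmem : q ∈ convexHull ℝ (↑t' : Set ((Fin m → ℝ) × ℝ)) := by
      rw [← hq_comb', affineCombination_eq_centerMass hsum']
      apply Finset.centerMass_mem_convexHull
      · intro j _
        exact hnn j q hqσ
      · rw [hsum']; norm_num
      · intro j hj
        rw [hBapp]
        have hji : j ≠ i := (Finset.mem_erase.1 hj).1
        rw [ht']
        exact Finset.mem_coe.2 (Finset.mem_erase.2 ⟨fun hc => hji (Subtype.ext hc), j.2⟩)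
    refine ⟨t', ?_, ?_, q, hqmem, hq1, ?_⟩
    · exact Subset.trans (Finset.coe_subset.2 (Finset.erase_subset _ _)) htA
    · rw [ht', Finset.card_erase_of_mem i.2, heq]
      omega
    · exact isMinOn_iff.1 hqmin p ⟨hpt, rfl⟩

/-- Key reduction lemma: every measure in `M(S,φ)` is dominated (for the value of `∫ g`)
by a measure in `M_{m+1}(S,φ)` with smaller-or-equal `∫ g`. -/
lemma key_reduction {n m : ℕ} (f : (Fin n → ℝ) → Fin m → ℝ) (g : (Fin n → ℝ) → ℝ)
    (S : Set (Fin n → ℝ)) (φ : Fin m → ℝ)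
    (hΓ : Continuous fun x => (f x, g x)) :
    ∀ μ ∈ MC n m f g S φ, ∃ ν ∈ MCk n m f g S φ (m + 1),
      ∫ x, g x ∂ν ≤ ∫ x, g x ∂μ := by
  classical
  intro μ hμ
  obtain ⟨hprob, hsupp, hfint, hfeq, hgint⟩ := hμ
  haveI := hprob
  set Γ : (Fin n → ℝ) → (Fin m → ℝ) × ℝ := fun x => (f x, g x) with hΓdef
  have hfc : Continuous f := continuous_fst.comp hΓ
  have hgc : Continuous g := continuous_snd.comp hΓ
  have hfint' : Integrable f μ := by
    refine Integrable.mono' (integrable_finset_sum Finset.univ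
      (fun i _ => (hfint i).norm)) hfc.aestronglyMeasurable ?_
    refine Eventually.of_forall fun x => ?_
    rw [pi_norm_le_iff_of_nonneg (Finset.sum_nonneg fun i _ => norm_nonneg _)]
    intro i
    exact Finset.single_le_sum (f := fun i => ‖f x i‖) (fun j _ => norm_nonneg _)
      (Finset.mem_univ i)
  have hΓint : Integrable Γ μ := hfint'.prodMk hgint
  set p := ∫ x, Γ x ∂μ with hp
  have hpfst : p.1 = ∫ x, f x ∂μ := by
    have h := (ContinuousLinearMap.fst ℝ (Fin m → ℝ) ℝ).integral_comp_comm hΓint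
    rw [hp]
    exact h.symm
  have hp1 : p.1 = φ := by
    rw [hpfst]
    funext i
    have h2 := (ContinuousLinearMap.proj (R := ℝ) (φ := fun _ : Fin m => ℝ) i).integral_comp_comm
      hfint'
    have h3 : (∫ x, f x ∂μ) i =
        (ContinuousLinearMap.proj (R := ℝ) (φ := fun _ : Fin m => ℝ) i) (∫ x, f x ∂μ) := rfl
    rw [h3, ← h2]
    exact hfeq i
  have hp2 : p.2 = ∫ x, g x ∂μ := by
    have h := (ContinuousLinearMap.snd ℝ (Fin m → ℝ) ℝ).integral_comp_comm hΓint
    rw [hp]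
    exact h.symm
  have hbary : p ∈ convexHull ℝ (Γ '' msupport μ) :=
    barycenter_mem_convexHull hΓ μ hΓint
  obtain ⟨t, htsub, htcard, q, hq, hq1, hq2⟩ := cara_min m _ hbary
  have hch : ∀ y ∈ t, ∃ x, x ∈ msupport μ ∧ Γ x = y := by
    intro y hy
    obtain ⟨x, hx, hxy⟩ := htsub hy
    exact ⟨x, hx, hxy⟩
  choose! ξ hξT hξΓ using hch
  rw [Finset.convexHull_eq] at hq
  obtain ⟨w, hw0, hw1, hwq⟩ := hq
  have hsum_eq : ∑ y ∈ t, w y • y = q := by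
    rw [← hwq, Finset.centerMass_eq_of_sum_1 _ _ hw1]
    rfl
  set ν : Measure (Fin n → ℝ) :=
    ∑ y ∈ t, (ENNReal.ofReal (w y)) • Measure.dirac (ξ y) with hν
  have hint_each : ∀ (h : (Fin n → ℝ) → ℝ), Continuous h → ∀ y ∈ t,
      Integrable h ((ENNReal.ofReal (w y)) • Measure.dirac (ξ y)) := by
    intro h hc y _
    refine Integrable.smul_measure ?_ ENNReal.ofReal_ne_top
    refine ⟨hc.aestronglyMeasurable, ?_⟩
    simp only [HasFiniteIntegral]
    rw [lintegral_dirac]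
    exact ENNReal.coe_lt_top
  have hνint : ∀ (h : (Fin n → ℝ) → ℝ), Continuous h → Integrable h ν := by
    intro h hc
    rw [hν]
    exact integrable_finset_sum_measure.2 (hint_each h hc)
  have hνeval : ∀ (h : (Fin n → ℝ) → ℝ), Continuous h →
      ∫ x, h x ∂ν = ∑ y ∈ t, w y * h (ξ y) := by
    intro h hc
    rw [hν, integral_finset_sum_measure (hint_each h hc)]
    refine Finset.sum_congr rfl fun y hy => ?_
    rw [integral_smul_measure, integral_dirac, ENNReal.toReal_ofReal (hw0 y hy),
      smul_eq_mul]
  have hνuniv : ν Set.univ = 1 := by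
    rw [hν, Measure.finset_sum_apply]
    have : ∀ y ∈ t, (ENNReal.ofReal (w y) • Measure.dirac (ξ y)) Set.univ
        = ENNReal.ofReal (w y) := by
      intro y _
      rw [Measure.smul_apply, measure_univ, smul_eq_mul, mul_one]
    rw [Finset.sum_congr rfl this, ← ENNReal.ofReal_sum_of_nonneg hw0, hw1]
    exact ENNReal.ofReal_one
  haveI hνprob : IsProbabilityMeasure ν := ⟨hνuniv⟩
  set F : Finset (Fin n → ℝ) := t.image ξ with hF
  have hsupν : msupport ν ⊆ ↑F := by
    intro z hz
    by_contra hzF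
    refine hz (↑F : Set (Fin n → ℝ))ᶜ (F.finite_toSet.isClosed.isOpen_compl)
      (by simpa using hzF) ?_
    rw [hν, Measure.finset_sum_apply]
    refine Finset.sum_eq_zero fun y hy => ?_
    rw [Measure.smul_apply, Measure.dirac_apply]
    have hmem : ξ y ∈ (↑F : Set (Fin n → ℝ)) := by
      rw [hF]
      exact Finset.mem_coe.2 (Finset.mem_image_of_mem ξ hy)
    rw [Set.indicator_of_notMem (by simpa using hmem)]
    simp
  have hq1' : q.1 = φ := by rw [hq1, hp1]
  have hqfst : ∀ i, q.1 i = ∑ y ∈ t, w y * y.1 i := by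
    intro i
    rw [← hsum_eq]
    rw [Prod.fst_sum]
    rw [Finset.sum_apply]
    refine Finset.sum_congr rfl fun y _ => ?_
    rfl
  have hqsnd : q.2 = ∑ y ∈ t, w y * y.2 := by
    rw [← hsum_eq, Prod.snd_sum]
    rfl
  have hgν : ∫ x, g x ∂ν = q.2 := by
    rw [hνeval g hgc, hqsnd]
    refine Finset.sum_congr rfl fun y hy => ?_
    have : Γ (ξ y) = y := hξΓ y hy
    rw [show g (ξ y) = (Γ (ξ y)).2 from rfl, this]
  refine ⟨ν, ⟨⟨hνprob, ?_, ?_, ?_, hνint g hgc⟩, ?_⟩, ?_⟩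
  · -- msupport ν ⊆ S
    refine hsupν.trans ?_
    intro z hz
    rw [hF] at hz
    obtain ⟨y, hy, rfl⟩ := Finset.mem_image.1 (Finset.mem_coe.1 hz)
    exact hsupp (hξT y hy)
  · -- integrability of coordinates
    intro i
    exact hνint (fun x => f x i) ((continuous_apply i).comp hfc)
  · -- moments
    intro i
    rw [hνeval (fun x => f x i) ((continuous_apply i).comp hfc)]
    have : ∀ y ∈ t, w y * f (ξ y) i = w y * y.1 i := by
      intro y hy
      have hΓy : Γ (ξ y) = y := hξΓ y hy
      rw [show f (ξ y) i = (Γ (ξ y)).1 i from rfl, hΓy]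
    rw [Finset.sum_congr rfl this, ← hqfst i, hq1']
  · -- cardinality bound
    refine le_trans (Set.encard_mono hsupν) ?_
    rw [Set.encard_coe_eq_coe_finsetCard]
    have : F.card ≤ t.card := Finset.card_image_le
    exact_mod_cast le_trans (by exact_mod_cast this) (by exact_mod_cast htcard)
  · -- the integral inequality
    rw [hgν, ← hp2]
    exact hq2

lemma MC_neg_eq {n m : ℕ} (f : (Fin n → ℝ) → Fin m → ℝ) (g : (Fin n → ℝ) → ℝ)
    (S : Set (Fin n → ℝ)) (φ : Fin m → ℝ) :
    MC n m f (fun x => -g x) S φ = MC n m f g S φ := by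
  ext μ
  unfold MC
  simp only [mem_setOf_eq]
  constructor
  · rintro ⟨h1, h2, h3, h4, h5⟩
    refine ⟨h1, h2, h3, h4, ?_⟩
    have h6 : Integrable (fun x => -(-g x)) μ := h5.neg
    simpa only [neg_neg] using h6
  · rintro ⟨h1, h2, h3, h4, h5⟩
    exact ⟨h1, h2, h3, h4, h5.neg⟩

/-- if `S` is `F_σ` and `Γ` is continuous, the extrema over
`M(S,φ)` equal the extrema over `M_{m+1}(S,φ)`. -/
theorem Fsigma_reduction {n m : ℕ}
    (f : (Fin n → ℝ) → Fin m → ℝ) (g : (Fin n → ℝ) → ℝ)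
    (S : Set (Fin n → ℝ)) (φ : Fin m → ℝ)
    (hS : ∃ F : ℕ → Set (Fin n → ℝ), (∀ i, IsClosed (F i)) ∧ S = ⋃ i, F i)
    (hΓ : Continuous fun x => (f x, g x)) :
    (⨅ μ ∈ MC n m f g S φ, ((∫ x, g x ∂μ : ℝ) : EReal)) =
        (⨅ μ ∈ MCk n m f g S φ (m + 1), ((∫ x, g x ∂μ : ℝ) : EReal)) ∧
    (⨆ μ ∈ MC n m f g S φ, ((∫ x, g x ∂μ : ℝ) : EReal)) =
        (⨆ μ ∈ MCk n m f g S φ (m + 1), ((∫ x, g x ∂μ : ℝ) : EReal)) := by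
  have key₁ := key_reduction f g S φ hΓ
  have hΓ' : Continuous fun x => (f x, -g x) :=
    (continuous_fst.comp hΓ).prodMk (continuous_snd.comp hΓ).neg
  have key₂ := key_reduction f (fun x => -g x) S φ hΓ'
  have hMCeq := MC_neg_eq f g S φ
  have hMCkeq : MCk n m f (fun x => -g x) S φ (m + 1) = MCk n m f g S φ (m + 1) := by
    unfold MCk
    rw [hMCeq]
  constructor
  · apply le_antisymm
    · exact le_iInf₂ fun ν hν => iInf₂_le ν hν.1
    · refine le_iInf₂ fun μ hμ => ?_
      obtain ⟨ν, hν, hle⟩ := key₁ μ hμ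
      exact le_trans (iInf₂_le ν hν) (by exact_mod_cast hle)
  · apply le_antisymm
    · refine iSup₂_le fun μ hμ => ?_
      obtain ⟨ν, hν, hle⟩ := key₂ μ (hMCeq.symm ▸ hμ)
      have h2 : ∫ x, g x ∂μ ≤ ∫ x, g x ∂ν := by
        rw [integral_neg, integral_neg] at hle
        linarith
      exact le_iSup₂_of_le ν (hMCkeq ▸ hν) (by exact_mod_cast h2)
    · exact iSup₂_le fun ν hν => le_iSup₂_of_le ν hν.1 le_rfl
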